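/- If (X,S) is an infinite minimal subshift with exactly one asymptotic component, then Aut(X,S) is isomorphic to ℤ. -/

import Mathlib

open Filter Topology MeasureTheory

namespace AsympSOE

/-! ### Subshift basics -/

/-- Shift of a bi-infinite sequence by `n` (the `n`-th power of the left shift `S`). -/
def SShift {A : Type*} (n : ℤ) (x : ℤ → A) : ℤ → A := fun i => x (i + n)

/-- Two bi-infinite sequences are (left) asymptotic: they agree on a left half-line. -/
def SAsymp {A : Type*} (x y : ℤ → A) : Prop := ∃ ℓ : ℤ, ∀ i < ℓ, x i = y i

/-- `y` belongs to the shift-orbit of `x`. -/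
def SSameOrbit {A : Type*} (x y : ℤ → A) : Prop := ∃ n : ℤ, SShift n x = y

/-- The shift-orbits of `x` and `y` are asymptotic. -/
def SOrbAsymp {A : Type*} (x y : ℤ → A) : Prop :=
  ∃ n n' : ℤ, SAsymp (SShift n x) (SShift n' y)

/-- `C` is an asymptotic component of the subshift `X`: it is the `SOrbAsymp`-class of
some `x ∈ X` and contains at least two distinct orbits. -/
def SIsAsymComponent {A : Type*} (X : Set (ℤ → A)) (C : Set (ℤ → A)) : Prop :=
  ∃ x ∈ X, C = {y ∈ X | SOrbAsymp x y} ∧ ∃ y ∈ X, SOrbAsymp x y ∧ ¬ SSameOrbit x y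

/-- A subshift: a nonempty closed shift-invariant set of bi-infinite sequences. -/
def IsSubshift {A : Type*} [TopologicalSpace A] (X : Set (ℤ → A)) : Prop :=
  X.Nonempty ∧ IsClosed X ∧ (∀ x ∈ X, SShift 1 x ∈ X) ∧ (∀ x ∈ X, SShift (-1) x ∈ X)

/-- A minimal subshift: every orbit is dense. -/
def IsMinimalSubshift {A : Type*} [TopologicalSpace A] (X : Set (ℤ → A)) : Prop :=
  IsSubshift X ∧ ∀ x ∈ X, ∀ y ∈ X, y ∈ closure {z | SSameOrbit x z}

/-- The words of length `n` appearing in points of `X`. -/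
def langOf {A : Type*} (X : Set (ℤ → A)) (n : ℕ) : Set (List A) :=
  {w | ∃ x ∈ X, ∃ a : ℤ, (List.range n).map (fun t => x (a + t)) = w}

/-- The complexity function of a subshift. -/
noncomputable def complexityOf {A : Type*} (X : Set (ℤ → A)) (n : ℕ) : ℕ :=
  (langOf X n).ncard

/-- A Toeplitz sequence. -/
def IsToeplitzSeq {A : Type*} (x : ℤ → A) : Prop :=
  ∀ n : ℤ, ∃ p : ℕ, 0 < p ∧ ∀ k : ℤ, x (n + k * p) = x n

/-- A Toeplitz subshift: the shift-orbit closure of a Toeplitz sequence. -/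
def IsToeplitzSubshift {A : Type*} [TopologicalSpace A] (X : Set (ℤ → A)) : Prop :=
  ∃ x : ℤ → A, IsToeplitzSeq x ∧ X = closure {z | SSameOrbit x z}

/-! ### General topological dynamical systems -/

/-- The (full) orbit of `x` under the invertible map `T`. -/
def orbitEq {X : Type*} (T : Equiv.Perm X) (x : X) : Set X := {y | ∃ n : ℤ, (T ^ n) x = y}

/-- `x` and `y` are (left) asymptotic for `T`: `dist (T⁻ⁿ x) (T⁻ⁿ y) → 0` as `n → ∞`. -/
def MAsymp {X : Type*} [MetricSpace X] (T : Equiv.Perm X) (x y : X) : Prop :=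
  Tendsto (fun n : ℕ => dist ((T ^ (-(n : ℤ))) x) ((T ^ (-(n : ℤ))) y)) atTop (𝓝 0)

/-- The orbits of `x` and `y` are asymptotic. -/
def MOrbAsymp {X : Type*} [MetricSpace X] (T : Equiv.Perm X) (x y : X) : Prop :=
  ∃ n n' : ℤ, MAsymp T ((T ^ n) x) ((T ^ n') y)

/-- `C` is an asymptotic component of the system `(X, T)`: the `MOrbAsymp`-class of some
point `x`, containing at least two distinct orbits. -/
def MIsAsymComponent {X : Type*} [MetricSpace X] (T : Equiv.Perm X) (C : Set X) : Prop :=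
  ∃ x, C = {y | MOrbAsymp T x y} ∧ ∃ y, MOrbAsymp T x y ∧ y ∉ orbitEq T x

/-- A minimal Cantor system: the compact metric space `X` is a Cantor space (nonempty,
totally disconnected, without isolated points) and every `T`-orbit is dense. -/
def IsMinimalCantor {X : Type*} [MetricSpace X] (T : X ≃ₜ X) : Prop :=
  CompactSpace X ∧ TotallyDisconnectedSpace X ∧ Nonempty X ∧
    (∀ x : X, Filter.NeBot (𝓝[≠] x)) ∧ ∀ x : X, Dense (orbitEq T.toEquiv x)

/-- Strong orbit equivalence of the systems `(X, T)` and `(Y, S)`: an orbit equivalence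
whose two orbit cocycles each have at most one point of discontinuity. -/
def IsSOE {X Y : Type*} [TopologicalSpace X] [TopologicalSpace Y]
    (T : X ≃ₜ X) (S : Y ≃ₜ Y) : Prop :=
  ∃ φ : X ≃ₜ Y,
    (∀ x : X, φ '' orbitEq T.toEquiv x = orbitEq S.toEquiv (φ x)) ∧
    ∃ α β : X → ℤ,
      (∀ x, φ (T x) = (S.toEquiv ^ α x) (φ x)) ∧
      (∀ x, φ ((T.toEquiv ^ β x) x) = S (φ x)) ∧
      {x | ¬ContinuousAt α x}.Subsingleton ∧
      {x | ¬ContinuousAt β x}.Subsingleton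

/-- The automorphism group of a system `(Y, S)`, as a subgroup of the permutation group:
the bi-continuous bijections commuting with `S`. -/
def autGroup {Y : Type*} [TopologicalSpace Y] (S : Y ≃ₜ Y) : Subgroup (Equiv.Perm Y) where
  carrier := {φ | Continuous φ ∧ Continuous φ.symm ∧ ∀ y, φ (S y) = S (φ y)}
  one_mem' := ⟨continuous_id, continuous_id, fun _ => rfl⟩
  mul_mem' := by
    rintro a b ⟨ha1, ha2, ha3⟩ ⟨hb1, hb2, hb3⟩
    refine ⟨ha1.comp hb1, hb2.comp ha2, fun y => ?_⟩
    simp only [Equiv.Perm.mul_apply, hb3, ha3]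
  inv_mem' := by
    rintro a ⟨ha1, ha2, ha3⟩
    refine ⟨by simpa using ha2, ha1, fun y => ?_⟩
    have h : a (S (a⁻¹ y)) = S y := by
      rw [ha3 (a⁻¹ y)]; simp
    calc a⁻¹ (S y) = a⁻¹ (a (S (a⁻¹ y))) := by rw [h]
    _ = S (a⁻¹ y) := by simp

section Aux

set_option linter.unusedSectionVars false

variable {A : Type*} [Fintype A] [TopologicalSpace A] [DiscreteTopology A]

lemma sshift_zero (x : ℤ → A) : SShift 0 x = x := by
  funext i; simp [SShift]

lemma sshift_sshift (m n : ℤ) (x : ℤ → A) : SShift m (SShift n x) = SShift (n + m) x := by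
  funext i; show x (i + m + n) = x (i + (n + m)); congr 1; ring

lemma continuous_sshift (n : ℤ) : Continuous (SShift n : (ℤ → A) → (ℤ → A)) :=
  continuous_pi fun i => continuous_apply (i + n)

lemma sshift_mem {X : Set (ℤ → A)} (hsub : IsSubshift X) (n : ℤ) {x : ℤ → A} (hx : x ∈ X) :
    SShift n x ∈ X := by
  induction n using Int.induction_on with
  | zero => rwa [sshift_zero]
  | succ k ih =>
    have := hsub.2.2.1 _ ih
    rwa [sshift_sshift] at this
  | pred k ih =>
    have := hsub.2.2.2 _ ih
    rwa [sshift_sshift, show (-(k:ℤ) + -1) = (-(k:ℤ) - 1) by ring] at this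

lemma exists_finset_cylinder {U : Set (ℤ → A)} (hU : IsOpen U) {x : ℤ → A} (hx : x ∈ U) :
    ∃ F : Finset ℤ, ∀ y : ℤ → A, (∀ i ∈ F, y i = x i) → y ∈ U := by
  obtain ⟨I, u, hu, hsub⟩ := isOpen_pi_iff.mp hU x hx
  refine ⟨I, fun y hy => hsub fun i hi => ?_⟩
  rw [hy i hi]; exact (hu i hi).2

lemma isOpen_cylinder (F : Finset ℤ) (x : ℤ → A) :
    IsOpen {y : ℤ → A | ∀ i ∈ F, y i = x i} := by
  have : {y : ℤ → A | ∀ i ∈ F, y i = x i} = ⋂ i ∈ F, (fun y : ℤ → A => y i) ⁻¹' {x i} := by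
    ext y; simp
  rw [this]
  exact isOpen_biInter_finset fun i _ =>
    (isOpen_discrete _).preimage (continuous_apply i)

variable {X : Set (ℤ → A)} {S' : ↥X ≃ₜ ↥X}

lemma coe_zpow (hS' : ∀ x : ↥X, (S' x : ℤ → A) = SShift 1 (x : ℤ → A)) (n : ℤ) (x : ↥X) :
    ((S'.toEquiv ^ n) x : ℤ → A) = SShift n (x : ℤ → A) := by
  have hsymm : ∀ x : ↥X, (S'.symm x : ℤ → A) = SShift (-1) (x : ℤ → A) := by
    intro x
    have h := hS' (S'.symm x)
    rw [S'.apply_symm_apply] at h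
    rw [h, sshift_sshift]
    norm_num [sshift_zero]
  induction n using Int.induction_on with
  | zero => simp [sshift_zero]
  | succ k ih =>
    have h1 : (S'.toEquiv ^ ((k : ℤ) + 1)) x = S' ((S'.toEquiv ^ (k : ℤ)) x) := by
      rw [add_comm, zpow_one_add]; rfl
    rw [h1, hS', ih, sshift_sshift]
  | pred k ih =>
    have h1 : (S'.toEquiv ^ (-(k : ℤ) - 1)) x = S'.symm ((S'.toEquiv ^ (-(k : ℤ))) x) := by
      have : (-(k : ℤ) - 1) = (-1) + (-(k:ℤ)) := by ring
      rw [this, zpow_add, zpow_neg_one]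
      rfl
    rw [h1, hsymm, ih, sshift_sshift, show (-(k:ℤ) + -1) = (-(k:ℤ) - 1) from by ring]

lemma uniform_radius (hXc : IsClosed X) {Ψ : ↥X → ↥X} (hΨ : Continuous Ψ) :
    ∃ r : ℕ, ∀ x y : ↥X, (∀ i : ℤ, |i| ≤ (r : ℤ) → (x : ℤ → A) i = (y : ℤ → A) i) →
      (Ψ x : ℤ → A) 0 = (Ψ y : ℤ → A) 0 := by
  haveI : CompactSpace ↥X := isCompact_iff_compactSpace.mp hXc.isCompact
  set K : Set (↥X × ↥X) := {p | (Ψ p.1 : ℤ → A) 0 ≠ (Ψ p.2 : ℤ → A) 0} with hK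
  have hco : Continuous fun p : ↥X × ↥X => ((Ψ p.1 : ℤ → A) 0, (Ψ p.2 : ℤ → A) 0) := by
    apply Continuous.prodMk
    · exact (continuous_apply (0:ℤ)).comp (continuous_subtype_val.comp (hΨ.comp continuous_fst))
    · exact (continuous_apply (0:ℤ)).comp (continuous_subtype_val.comp (hΨ.comp continuous_snd))
  have hKcl : IsClosed K := by
    have : K = (fun p : ↥X × ↥X => ((Ψ p.1 : ℤ → A) 0, (Ψ p.2 : ℤ → A) 0)) ⁻¹'
        {q : A × A | q.1 ≠ q.2} := rfl
    rw [this]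
    exact (isClosed_discrete _).preimage hco
  set U : ℕ → Set (↥X × ↥X) :=
    fun r => {p | ∃ i : ℤ, |i| ≤ (r : ℤ) ∧ (p.1 : ℤ → A) i ≠ (p.2 : ℤ → A) i} with hU
  have hUopen : ∀ r, IsOpen (U r) := by
    intro r
    have : U r = ⋃ i : ℤ, ⋃ (_ : |i| ≤ (r : ℤ)),
        {p : ↥X × ↥X | (p.1 : ℤ → A) i ≠ (p.2 : ℤ → A) i} := by
      ext p; simp [hU]
    rw [this]
    refine isOpen_iUnion fun i => isOpen_iUnion fun _ => ?_
    have hcoi : Continuous fun p : ↥X × ↥X => ((p.1 : ℤ → A) i, (p.2 : ℤ → A) i) := by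
      apply Continuous.prodMk
      · exact (continuous_apply i).comp (continuous_subtype_val.comp continuous_fst)
      · exact (continuous_apply i).comp (continuous_subtype_val.comp continuous_snd)
    exact (isOpen_discrete {q : A × A | q.1 ≠ q.2}).preimage hcoi
  have hUmono : ∀ r r', r ≤ r' → U r ⊆ U r' := by
    rintro r r' hrr p ⟨i, hi, hne⟩
    exact ⟨i, hi.trans (by exact_mod_cast hrr), hne⟩
  have hcover : K ⊆ ⋃ r : ℕ, U r := by
    rintro p hp
    have hne : p.1 ≠ p.2 := fun h => hp (by rw [h])
    have hne' : (p.1 : ℤ → A) ≠ (p.2 : ℤ → A) := fun h => hne (Subtype.ext h)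
    obtain ⟨i, hi⟩ := Function.ne_iff.mp hne'
    exact Set.mem_iUnion.mpr ⟨i.natAbs, i, by rw [Int.abs_eq_natAbs], hi⟩
  obtain ⟨t, ht⟩ := hKcl.isCompact.elim_finite_subcover U hUopen hcover
  refine ⟨t.sup id, fun x y hxy => ?_⟩
  by_contra hne
  have hmem : (x, y) ∈ K := hne
  obtain ⟨r, hrt, hpr⟩ := Set.mem_iUnion₂.mp (ht hmem)
  obtain ⟨i, hi, hnei⟩ := hUmono r (t.sup id) (Finset.le_sup (f := id) hrt) hpr
  exact hnei (hxy i hi)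

lemma continuity_window {Ψ : ↥X → ↥X} (hΨ : Continuous Ψ) (z : ↥X) (i₀ : ℤ) :
    ∃ F : Finset ℤ, ∀ w : ↥X, (∀ i ∈ F, (w : ℤ → A) i = (z : ℤ → A) i) →
      (Ψ w : ℤ → A) i₀ = (Ψ z : ℤ → A) i₀ := by
  have hV : IsOpen {w : ↥X | (Ψ w : ℤ → A) i₀ = (Ψ z : ℤ → A) i₀} := by
    have hc : Continuous fun w : ↥X => (Ψ w : ℤ → A) i₀ :=
      (continuous_apply i₀).comp (continuous_subtype_val.comp hΨ)
    exact (isOpen_discrete {(Ψ z : ℤ → A) i₀}).preimage hc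
  obtain ⟨V, hVopen, hVeq⟩ := isOpen_induced_iff.mp hV
  have hzV : (z : ℤ → A) ∈ V := by
    have : z ∈ {w : ↥X | (Ψ w : ℤ → A) i₀ = (Ψ z : ℤ → A) i₀} := rfl
    rw [← hVeq] at this; exact this
  obtain ⟨F, hF⟩ := exists_finset_cylinder hVopen hzV
  refine ⟨F, fun w hw => ?_⟩
  have : w ∈ (Subtype.val ⁻¹' V : Set ↥X) := hF _ hw
  rw [hVeq] at this
  exact this

lemma backward_recurrent (hmin : IsMinimalSubshift X) {z : ℤ → A} (hz : z ∈ X)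
    (K : ℕ) (F : Finset ℤ) :
    ∃ k : ℕ, K ≤ k ∧ ∀ i ∈ F, SShift (-(k : ℤ)) z i = z i := by
  obtain ⟨hsub, hdense⟩ := hmin
  set D : ℕ → Set (ℤ → A) :=
    fun K => closure {w | ∃ k : ℕ, K ≤ k ∧ SShift (-(k : ℤ)) z = w} with hD
  have hDcl : ∀ K, IsClosed (D K) := fun _ => isClosed_closure
  have hDne : ∀ K, (D K).Nonempty :=
    fun K => ⟨SShift (-(K : ℤ)) z, subset_closure ⟨K, le_refl _, rfl⟩⟩
  have hDanti : ∀ K, D (K + 1) ⊆ D K := by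
    intro K
    apply closure_mono
    rintro w ⟨k, hk, he⟩
    exact ⟨k, by omega, he⟩
  obtain ⟨w, hw⟩ := IsCompact.nonempty_iInter_of_sequence_nonempty_isCompact_isClosed D
    hDanti hDne ((hDcl 0).isCompact) hDcl
  have hwK : ∀ K, w ∈ D K := by
    intro K; exact Set.mem_iInter.mp hw K
  have hwX : w ∈ X := by
    have : D 0 ⊆ X := by
      apply closure_minimal _ hsub.2.1
      rintro v ⟨k, _, rfl⟩
      exact sshift_mem hsub _ hz
    exact this (hwK 0)
  have horb : ∀ (m : ℤ) (K : ℕ), SShift m w ∈ D K := by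
    intro m K
    have hw' := hwK (K + m.toNat)
    have himg : SShift m '' {v | ∃ k : ℕ, K + m.toNat ≤ k ∧ SShift (-(k : ℤ)) z = v} ⊆
        {v | ∃ k : ℕ, K ≤ k ∧ SShift (-(k : ℤ)) z = v} := by
      rintro _ ⟨_, ⟨k, hk, rfl⟩, rfl⟩
      have hk' : (K : ℤ) + (m.toNat : ℤ) ≤ (k : ℤ) := by exact_mod_cast hk
      have hmt : m ≤ (m.toNat : ℤ) := Int.self_le_toNat m
      refine ⟨((k : ℤ) - m).toNat, by omega, ?_⟩
      rw [sshift_sshift]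
      have harg : (-((((k : ℤ) - m).toNat : ℕ) : ℤ)) = -(k : ℤ) + m := by omega
      rw [harg]
    have h1 : SShift m w ∈ SShift m '' (D (K + m.toNat)) := ⟨w, hw', rfl⟩
    have h2 := image_closure_subset_closure_image (f := SShift m)
      (s := {v | ∃ k : ℕ, K + m.toNat ≤ k ∧ SShift (-(k : ℤ)) z = v}) (continuous_sshift m)
    exact closure_mono himg (h2 h1)
  have hzD : z ∈ D K := by
    have horbsub : {u | SSameOrbit w u} ⊆ D K := by
      rintro u ⟨m, rfl⟩
      exact horb m K
    exact (closure_minimal horbsub (hDcl K)) (hdense w hwX z hz)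
  have hopen : IsOpen {y : ℤ → A | ∀ i ∈ F, y i = z i} := isOpen_cylinder F z
  obtain ⟨v, hv1, hv2⟩ := mem_closure_iff.mp hzD _ hopen (fun i _ => rfl)
  obtain ⟨k, hk, rfl⟩ := hv2
  exact ⟨k, hk, fun i hi => hv1 i hi⟩

end Aux

/-- An infinite minimal subshift with exactly one asymptotic component
has automorphism group isomorphic to `ℤ`. -/
theorem aut_eq_int_of_unique_component
    {A : Type*} [Fintype A] [TopologicalSpace A] [DiscreteTopology A]
    (X : Set (ℤ → A)) (hmin : IsMinimalSubshift X) (hinf : X.Infinite)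
    (S' : ↥X ≃ₜ ↥X) (hS' : ∀ x : ↥X, (S' x : ℤ → A) = SShift 1 (x : ℤ → A))
    (huniq : ∃! C : Set (ℤ → A), SIsAsymComponent X C) :
    Nonempty (↥(autGroup S') ≃* Multiplicative ℤ) := by
  classical
  have hsub := hmin.1
  have hXcl : IsClosed X := hsub.2.1
  set σ : Equiv.Perm ↥X := S'.toEquiv with hσdef
  have hσcoe : ∀ (n : ℤ) (x : ↥X), ((σ ^ n) x : ℤ → A) = SShift n (x : ℤ → A) :=
    fun n x => coe_zpow hS' n x
  have hσmem : σ ∈ autGroup S' := by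
    refine ⟨S'.continuous, S'.symm.continuous, fun y => rfl⟩
  have hσcomm : ∀ (φ : Equiv.Perm ↥X), (∀ y, φ (S' y) = S' (φ y)) →
      ∀ (n : ℤ) (u : ↥X), φ ((σ ^ n) u) = (σ ^ n) (φ u) := by
    intro φ hφ n u
    have hc : Commute φ σ := Equiv.ext fun y => hφ y
    have heq := (hc.zpow_right n).eq
    calc φ ((σ ^ n) u) = (φ * σ ^ n) u := rfl
      _ = (σ ^ n * φ) u := by rw [heq]
      _ = (σ ^ n) (φ u) := rfl
  -- automorphisms preserve asymptoticity
  have hpres : ∀ (φ : Equiv.Perm ↥X), φ ∈ autGroup S' →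
      ∀ x y : ↥X, SAsymp (x : ℤ → A) (y : ℤ → A) →
        SAsymp (φ x : ℤ → A) (φ y : ℤ → A) := by
    rintro φ ⟨h1, h2, h3⟩ x y ⟨ℓ, hℓ⟩
    obtain ⟨r, hr⟩ := uniform_radius hXcl h1
    refine ⟨ℓ - r, fun j hj => ?_⟩
    have e1 : (φ x : ℤ → A) j = ((σ ^ j) (φ x) : ℤ → A) 0 := by
      rw [hσcoe]
      show _ = (φ x : ℤ → A) (0 + j)
      rw [zero_add]
    have e2 : (φ y : ℤ → A) j = ((σ ^ j) (φ y) : ℤ → A) 0 := by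
      rw [hσcoe]
      show _ = (φ y : ℤ → A) (0 + j)
      rw [zero_add]
    rw [e1, e2, ← hσcomm φ h3 j x, ← hσcomm φ h3 j y]
    apply hr
    intro i hi
    rw [hσcoe, hσcoe]
    show (x : ℤ → A) (i + j) = (y : ℤ → A) (i + j)
    apply hℓ
    have hi' := abs_le.mp hi
    omega
  obtain ⟨C, hC, hCuniq⟩ := huniq
  obtain ⟨x, hxX, hCeq, y, hyX, hxy, hnotorb⟩ := hC
  set x' : ↥X := ⟨x, hxX⟩ with hx'def
  set y' : ↥X := ⟨y, hyX⟩ with hy'def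
  -- main claim: every automorphism is a power of σ
  have hmain : ∀ φ : Equiv.Perm ↥X, φ ∈ autGroup S' → ∃ k : ℤ, φ = σ ^ k := by
    intro φ hφ
    obtain ⟨h1, h2, h3⟩ := hφ
    have hC' : SIsAsymComponent X {w ∈ X | SOrbAsymp ((φ x' : ℤ → A)) w} := by
      refine ⟨(φ x' : ℤ → A), (φ x').2, rfl, (φ y' : ℤ → A), (φ y').2, ?_, ?_⟩
      · obtain ⟨n, n', hasymp⟩ := hxy
        refine ⟨n, n', ?_⟩
        have hax : SAsymp (((σ ^ n) x' : ℤ → A)) (((σ ^ n') y' : ℤ → A)) := by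
          rw [hσcoe, hσcoe]
          exact hasymp
        have hres := hpres φ ⟨h1, h2, h3⟩ _ _ hax
        rw [hσcomm φ h3 n x', hσcomm φ h3 n' y', hσcoe, hσcoe] at hres
        exact hres
      · rintro ⟨m, hm⟩
        apply hnotorb
        refine ⟨m, ?_⟩
        have hcm : ((σ ^ m) (φ x') : ℤ → A) = (φ y' : ℤ → A) := by
          rw [hσcoe]
          exact hm
        have h4 : (σ ^ m) (φ x') = φ y' := Subtype.ext hcm
        have h5 : φ ((σ ^ m) x') = φ y' := by rw [hσcomm φ h3 m x']; exact h4
        have h6 : (σ ^ m) x' = y' := φ.injective h5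
        have h7 := congrArg (Subtype.val) h6
        rw [hσcoe] at h7
        exact h7
    have hCeq' := hCuniq _ hC'
    have hmemC : (φ x' : ℤ → A) ∈ C := by
      rw [← hCeq']
      exact ⟨(φ x').2, 0, 0, 0, fun i _ => rfl⟩
    rw [hCeq] at hmemC
    obtain ⟨-, n, n', hasymp⟩ := hmemC
    set ψ : Equiv.Perm ↥X := σ ^ (n' - n) * φ with hψdef
    have hψmem : ψ ∈ autGroup S' :=
      (autGroup S').mul_mem ((autGroup S').zpow_mem hσmem _) ⟨h1, h2, h3⟩
    obtain ⟨g1, g2, g3⟩ := hψmem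
    set z' : ↥X := (σ ^ n) x' with hz'def
    have hzasymp : SAsymp (z' : ℤ → A) ((ψ z') : ℤ → A) := by
      have e : (ψ z' : ℤ → A) = SShift n' (φ x' : ℤ → A) := by
        show (((σ ^ (n' - n)) (φ ((σ ^ n) x'))) : ℤ → A) = _
        rw [hσcomm φ h3 n x']
        have e3 : (σ ^ (n' - n)) ((σ ^ n) (φ x')) = (σ ^ n') (φ x') := by
          rw [← Equiv.Perm.mul_apply, ← zpow_add, show n' - n + n = n' from by ring]
        rw [e3, hσcoe]
      have e2 : (z' : ℤ → A) = SShift n (x' : ℤ → A) := hσcoe n x'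
      rw [e, e2]
      exact hasymp
    have hψz : ψ z' = z' := by
      apply Subtype.ext
      funext i₀
      obtain ⟨F, hF⟩ := continuity_window g1 z' i₀
      obtain ⟨ℓ, hℓ⟩ := hzasymp
      set K : ℕ := (i₀ - ℓ + 1).toNat with hKdef
      obtain ⟨k, hk, hagree⟩ := backward_recurrent hmin z'.2 K (insert i₀ F)
      set w' : ↥X := (σ ^ (-(k : ℤ))) z' with hw'def
      have hw'coe : (w' : ℤ → A) = SShift (-(k : ℤ)) (z' : ℤ → A) := hσcoe _ _
      have hagree' : ∀ i ∈ F, (w' : ℤ → A) i = (z' : ℤ → A) i := by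
        intro i hi
        rw [hw'coe]
        exact hagree i (Finset.mem_insert_of_mem hi)
      have hcw := hF w' hagree'
      have hpsiw : (ψ w' : ℤ → A) = SShift (-(k : ℤ)) (ψ z' : ℤ → A) := by
        rw [hw'def, hσcomm ψ g3 _ z', hσcoe]
      have hlhs : (ψ w' : ℤ → A) i₀ = (ψ z' : ℤ → A) (i₀ - k) := by
        rw [hpsiw]
        show (ψ z' : ℤ → A) (i₀ + -(k : ℤ)) = _
        rw [show i₀ + -(k : ℤ) = i₀ - k from by ring]
      have h7 : (ψ z' : ℤ → A) (i₀ - k) = (z' : ℤ → A) (i₀ - k) := by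
        symm
        apply hℓ
        have hk1 : (K : ℤ) ≤ (k : ℤ) := by exact_mod_cast hk
        have hk2 : (i₀ - ℓ + 1) ≤ (K : ℤ) := by rw [hKdef]; exact Int.self_le_toNat _
        omega
      have h8 : (z' : ℤ → A) (i₀ - k) = (z' : ℤ → A) i₀ := by
        have h9 := hagree i₀ (Finset.mem_insert_self i₀ F)
        calc (z' : ℤ → A) (i₀ - k) = SShift (-(k : ℤ)) (z' : ℤ → A) i₀ := by
              show _ = (z' : ℤ → A) (i₀ + -(k : ℤ))
              rw [show i₀ + -(k : ℤ) = i₀ - k from by ring]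
          _ = (z' : ℤ → A) i₀ := h9
      show (ψ z' : ℤ → A) i₀ = (z' : ℤ → A) i₀
      rw [← hcw, hlhs, h7, h8]
    have hψone : ψ = 1 := by
      have hclosed : IsClosed {u : ↥X | ψ u = u} := isClosed_eq g1 continuous_id
      have hfix : ∀ u : ↥X, ψ u = u := by
        intro u
        have humem : (u : ℤ → A) ∈ closure {v | SSameOrbit (z' : ℤ → A) v} :=
          hmin.2 _ z'.2 _ u.2
        have hucl : u ∈ closure {v : ↥X | ∃ m : ℤ, (σ ^ m) z' = v} := by
          rw [closure_subtype]
          convert humem using 2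
          ext v
          constructor
          · rintro ⟨v', ⟨m, rfl⟩, rfl⟩
            exact ⟨m, (hσcoe m z').symm⟩
          · rintro ⟨m, rfl⟩
            exact ⟨(σ ^ m) z', ⟨m, rfl⟩, hσcoe m z'⟩
        have hsubfix : {v : ↥X | ∃ m : ℤ, (σ ^ m) z' = v} ⊆ {u : ↥X | ψ u = u} := by
          rintro v ⟨m, rfl⟩
          show ψ ((σ ^ m) z') = (σ ^ m) z'
          rw [hσcomm ψ g3 m z', hψz]
        exact hclosed.closure_subset_iff.mpr hsubfix hucl
      exact Equiv.ext hfix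
    refine ⟨n - n', ?_⟩
    have h0 : σ ^ (n' - n) * φ = 1 := by rw [hψdef] at hψone; exact hψone
    calc φ = σ ^ (n - n') * (σ ^ (n' - n) * φ) := by
          rw [← mul_assoc, ← zpow_add, show n - n' + (n' - n) = 0 from by ring, zpow_zero,
            one_mul]
      _ = σ ^ (n - n') := by rw [h0, mul_one]
  -- aperiodicity
  have hinj : ∀ k : ℤ, σ ^ k = 1 → k = 0 := by
    intro k hk
    by_contra hk0
    obtain ⟨x₀, hx₀⟩ := hsub.1
    set x₀' : ↥X := ⟨x₀, hx₀⟩ with hx₀'def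
    have hper : SShift k x₀ = x₀ := by
      have hcc : ((σ ^ k) x₀' : ℤ → A) = (x₀' : ℤ → A) := by rw [hk]; rfl
      rw [hσcoe] at hcc
      exact hcc
    have hper' : ∀ m : ℤ, SShift (k + m) x₀ = SShift m x₀ := by
      intro m
      rw [← sshift_sshift m k x₀, hper]
    have hper'' : ∀ m : ℤ, SShift (-k + m) x₀ = SShift m x₀ := by
      intro m
      have h10 := hper' (-k + m)
      rw [show k + (-k + m) = m from by ring] at h10
      exact h10.symm
    set p : ℕ := k.natAbs with hpdef
    have hp : 0 < p := Int.natAbs_pos.mpr hk0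
    have hperiodp : ∀ m : ℤ, SShift (m + (p : ℤ)) x₀ = SShift m x₀ := by
      intro m
      rcases Int.natAbs_eq k with he | he
      · rw [show m + (p : ℤ) = k + m from by rw [he]; ring]
        exact hper' m
      · rw [show m + (p : ℤ) = -k + m from by rw [he]; ring]
        exact hper'' m
    have hb : ∀ m' : ℤ, SShift (m' - (p : ℤ)) x₀ = SShift m' x₀ := by
      intro m'
      have h11 := hperiodp (m' - (p : ℤ))
      rw [show m' - (p : ℤ) + (p : ℤ) = m' from by ring] at h11
      exact h11.symm
    have hmulp : ∀ q : ℤ, ∀ m : ℤ, SShift (m + q * (p : ℤ)) x₀ = SShift m x₀ := by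
      intro q
      induction q using Int.induction_on with
      | zero => intro m; rw [show m + 0 * (p : ℤ) = m from by ring]
      | succ j ih =>
        intro m
        rw [show m + ((j : ℤ) + 1) * (p : ℤ) = (m + j * (p : ℤ)) + (p : ℤ) from by ring]
        exact (hperiodp _).trans (ih m)
      | pred j ih =>
        intro m
        rw [show m + (-(j : ℤ) - 1) * (p : ℤ) = (m + (-(j : ℤ)) * (p : ℤ)) - (p : ℤ) from by ring]
        exact (hb _).trans (ih m)
    have hfin : {u : ℤ → A | SSameOrbit x₀ u}.Finite := by
      have hsubim : {u : ℤ → A | SSameOrbit x₀ u} ⊆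
          (fun j : Fin p => SShift ((j : ℕ) : ℤ) x₀) '' Set.univ := by
        rintro u ⟨n, rfl⟩
        have hmod : SShift n x₀ = SShift (n % (p : ℤ)) x₀ := by
          have h12 := hmulp (n / (p : ℤ)) (n % (p : ℤ))
          rw [Int.emod_add_ediv_mul n (p : ℤ)] at h12
          exact h12
        have h0le : 0 ≤ n % (p : ℤ) := Int.emod_nonneg n (by exact_mod_cast hp.ne')
        have hlt : n % (p : ℤ) < (p : ℤ) := Int.emod_lt_of_pos n (by exact_mod_cast hp)
        refine ⟨⟨(n % (p : ℤ)).toNat, by omega⟩, Set.mem_univ _, ?_⟩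
        show SShift ((((n % (p : ℤ)).toNat : ℕ)) : ℤ) x₀ = SShift n x₀
        rw [show ((((n % (p : ℤ)).toNat : ℕ)) : ℤ) = n % (p : ℤ) from by omega]
        exact hmod.symm
      exact Set.Finite.subset (Set.finite_univ.image _) hsubim
    have hXfin : X.Finite := by
      have hcl : IsClosed {u : ℤ → A | SSameOrbit x₀ u} := hfin.isClosed
      have hXsub : X ⊆ {u : ℤ → A | SSameOrbit x₀ u} := by
        intro u hu
        have h13 := hmin.2 x₀ hx₀ u hu
        rwa [hcl.closure_eq] at h13
      exact hfin.subset hXsub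
    exact hinf hXfin
  -- build the isomorphism
  set F : Multiplicative ℤ →* ↥(autGroup S') :=
    { toFun := fun m => ⟨σ ^ m.toAdd, (autGroup S').zpow_mem hσmem _⟩
      map_one' := by
        apply Subtype.ext
        show σ ^ ((1 : Multiplicative ℤ).toAdd) = 1
        norm_num
      map_mul' := by
        intro a b
        apply Subtype.ext
        show σ ^ ((a * b).toAdd) = ((σ ^ a.toAdd) * (σ ^ b.toAdd) : Equiv.Perm ↥X)
        rw [toAdd_mul, zpow_add] } with hFdef
  have hFinj : Function.Injective F := by
    intro a b hab
    have hcc : σ ^ a.toAdd = σ ^ b.toAdd := congrArg Subtype.val hab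
    have h0 : σ ^ (a.toAdd - b.toAdd) = 1 := by
      rw [zpow_sub, hcc, mul_inv_cancel]
    have h14 := hinj _ h0
    have h15 : a.toAdd = b.toAdd := by omega
    exact Multiplicative.toAdd.injective h15
  have hFsurj : Function.Surjective F := by
    intro phih
    obtain ⟨k, hk⟩ := hmain phih.1 phih.2
    exact ⟨Multiplicative.ofAdd k, Subtype.ext hk.symm⟩
  exact ⟨(MulEquiv.ofBijective F ⟨hFinj, hFsurj⟩).symm⟩


end AsympSOE
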